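/- Let q be a real polynomial of degree d such that |q(x)| ≤ ε·M for all x in [−1,1] (where ε, M > 0), and suppose q(1+μ) = 1 for some μ > 0. Then 1 ≤ ε·M·e^{2d√(2μ+μ²)}. -/

import Mathlib

open Polynomial Real

lemma chebyT_natDegree_le : ∀ n : ℕ, (Polynomial.Chebyshev.T ℝ n).natDegree ≤ n := by
  have key : ∀ n : ℕ, (Polynomial.Chebyshev.T ℝ n).natDegree ≤ n ∧
      (Polynomial.Chebyshev.T ℝ (n+1)).natDegree ≤ n+1 := by
    intro n
    induction n with
    | zero => simp [Polynomial.Chebyshev.T_zero, Polynomial.Chebyshev.T_one]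
    | succ n ih =>
      refine ⟨ih.2, ?_⟩
      have h2 : Polynomial.Chebyshev.T ℝ ((n:ℤ)+2) =
          2 * X * Polynomial.Chebyshev.T ℝ ((n:ℤ)+1) - Polynomial.Chebyshev.T ℝ n :=
        Polynomial.Chebyshev.T_add_two ℝ n
      have : ((n+1:ℕ)+1 : ℤ) = (n:ℤ)+2 := by push_cast; ring
      rw [this, h2]
      refine le_trans (natDegree_sub_le _ _) (max_le ?_ (le_trans ih.1 (by omega)))
      refine le_trans (natDegree_mul_le) ?_
      have hx : (2 * X : ℝ[X]).natDegree ≤ 1 :=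
        le_trans natDegree_mul_le (by simp)
      have := ih.2
      omega
  exact fun n => (key n).1

lemma chebyT_degree_lt (d : ℕ) : (Polynomial.Chebyshev.T ℝ d).degree < (d+1 : ℕ) :=
  lt_of_le_of_lt degree_le_natDegree (by exact_mod_cast Nat.lt_succ_of_le (chebyT_natDegree_le d))

lemma chebyT_eval_cosh (n : ℕ) (t : ℝ) :
    (Polynomial.Chebyshev.T ℝ n).eval (Real.cosh t) = Real.cosh (n * t) := by
  have h := Polynomial.Chebyshev.T_complex_cos ((t : ℂ) * Complex.I) n
  have h1 : ((((Polynomial.Chebyshev.T ℝ n).eval (Real.cosh t)) : ℝ) : ℂ)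
      = (Polynomial.Chebyshev.T ℂ n).eval ((Real.cosh t : ℝ) : ℂ) :=
    Polynomial.Chebyshev.complex_ofReal_eval_T _ n
  have h2 : ((Real.cosh t : ℝ) : ℂ) = Complex.cos ((t : ℂ) * Complex.I) := by
    rw [Complex.cos_mul_I, Complex.ofReal_cosh]
  have h3 : Complex.cos ((n : ℂ) * ((t:ℂ) * Complex.I)) = ((Real.cosh (n * t) : ℝ) : ℂ) := by
    rw [show (n : ℂ) * ((t:ℂ) * Complex.I) = ((n * t : ℝ) : ℂ) * Complex.I by push_cast; ring,
      Complex.cos_mul_I, Complex.ofReal_cosh]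
  have : ((((Polynomial.Chebyshev.T ℝ n).eval (Real.cosh t)) : ℝ) : ℂ)
      = ((Real.cosh (n * t) : ℝ) : ℂ) := by
    rw [h1, h2, h]
    exact_mod_cast h3
  exact_mod_cast this

lemma chebyT_eval_le (d : ℕ) (μ : ℝ) (hμ : 0 < μ) :
    (Polynomial.Chebyshev.T ℝ d).eval (1+μ) ≤ Real.exp (2*d*Real.sqrt (2*μ+μ^2)) := by
  set w := Real.sqrt (2*μ+μ^2) with hw
  have hwnn : 0 ≤ w := Real.sqrt_nonneg _
  have hw2 : w^2 = 2*μ+μ^2 := Real.sq_sqrt (by nlinarith)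
  set t := Real.log (1+μ+w) with ht
  have hpos : (0:ℝ) < 1+μ+w := by linarith
  have hexp : Real.exp t = 1+μ+w := Real.exp_log hpos
  have hinv : Real.exp (-t) = 1+μ-w := by
    rw [Real.exp_neg, hexp]
    field_simp
    nlinarith
  have hcosh : Real.cosh t = 1+μ := by
    rw [Real.cosh_eq, hexp, hinv]; ring
  have htnn : 0 ≤ t := Real.log_nonneg (by linarith)
  have hμw : μ ≤ w := by
    rw [hw, show (2*μ+μ^2 : ℝ) = μ^2 + 2*μ by ring]
    nlinarith [Real.sq_sqrt (show (0:ℝ) ≤ μ^2+2*μ by nlinarith),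
      Real.sqrt_nonneg (μ^2+2*μ), sq_nonneg (Real.sqrt (μ^2+2*μ) - μ)]
  have htle : t ≤ 2*w := by
    have := Real.log_le_sub_one_of_pos hpos
    rw [← ht] at this
    linarith
  calc (Polynomial.Chebyshev.T ℝ d).eval (1+μ) = Real.cosh (d*t) := by
        rw [← hcosh, chebyT_eval_cosh]
    _ ≤ Real.exp (d*t) := by
        rw [Real.cosh_eq]
        have : Real.exp (-(d*t)) ≤ Real.exp (d*t) := by
          apply Real.exp_le_exp.2
          have : 0 ≤ (d:ℝ)*t := mul_nonneg (Nat.cast_nonneg d) htnn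
          linarith
        linarith
    _ ≤ Real.exp (2*d*w) := by
        apply Real.exp_le_exp.2
        have : (d:ℝ)*t ≤ (d:ℝ)*(2*w) := mul_le_mul_of_nonneg_left htle (Nat.cast_nonneg d)
        linarith

theorem error_lower_bound_from_chebyshev (q : Polynomial ℝ) (d : ℕ) (ε M μ : ℝ)
    (hε : 0 < ε) (hM : 0 < M) (hμ : 0 < μ)
    (hdeg : q.degree ≤ d)
    (hbound : ∀ x : ℝ, x ∈ Set.Icc (-1 : ℝ) 1 → |q.eval x| ≤ ε * M)
    (hval : q.eval (1 + μ) = 1) :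
    1 ≤ ε * M * Real.exp (2 * d * Real.sqrt (2 * μ + μ ^ 2)) := by
  have hπ := Real.pi_pos
  set y : ℝ := 1 + μ with hy
  set v : ℕ → ℝ := fun k => Real.cos (k * π / d) with hv
  set s : Finset ℕ := Finset.range (d+1) with hs
  have hcard : s.card = d+1 := Finset.card_range _
  -- strict decrease of nodes
  have hdec : ∀ k l : ℕ, k < l → l ≤ d → v l < v k := by
    intro k l hkl hld
    have hd : 0 < d := by omega
    have hdr : (0:ℝ) < d := by exact_mod_cast hd
    apply Real.strictAntiOn_cos
    · constructor
      · positivity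
      · rw [div_le_iff₀ hdr]
        have : (k:ℝ) ≤ d := by exact_mod_cast le_trans (le_of_lt hkl) hld
        nlinarith
    · constructor
      · positivity
      · rw [div_le_iff₀ hdr]
        have : (l:ℝ) ≤ d := by exact_mod_cast hld
        nlinarith
    · rw [div_lt_div_iff₀ hdr hdr]
      have h2 : (k:ℝ) < l := by exact_mod_cast hkl
      nlinarith [mul_pos (mul_pos (sub_pos.mpr h2) hπ) hdr]
  have hinj : Set.InjOn v s := by
    intro k hk l hl hkl
    simp only [hs, Finset.coe_range, Set.mem_Iio] at hk hl
    rcases lt_trichotomy k l with h | h | h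
    · exact absurd hkl (ne_of_gt (hdec k l h (by omega)))
    · exact h
    · exact absurd hkl (ne_of_lt (hdec l k h (by omega)))
  have hdeglt : q.degree < (s.card : ℕ) := by
    rw [hcard]
    exact lt_of_le_of_lt hdeg (by exact_mod_cast Nat.lt_succ_self d)
  have hq : q = Lagrange.interpolate s v (fun k => q.eval (v k)) :=
    Lagrange.eq_interpolate hinj hdeglt
  set B : ℕ → ℝ := fun i => (Lagrange.basis s v i).eval y with hB
  -- the interpolation identity at y
  have h1 : (1:ℝ) = ∑ i ∈ s, q.eval (v i) * B i := by
    calc (1:ℝ) = q.eval y := hval.symm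
      _ = (Lagrange.interpolate s v (fun k => q.eval (v k))).eval y := by rw [← hq]
      _ = ∑ i ∈ s, q.eval (v i) * B i := by
          rw [Lagrange.interpolate_apply, Polynomial.eval_finset_sum]
          exact Finset.sum_congr rfl (fun i _ => by simp [hB])
  -- sign of basis values
  have habs : ∀ i ∈ s, |B i| = (-1:ℝ)^i * B i := by
    intro i hi
    have hid : i ≤ d := by simpa [hs, Nat.lt_succ_iff] using hi
    have hBi : B i = ∏ j ∈ s.erase i, ((v i - v j)⁻¹ * (y - v j)) := by
      rw [hB]
      simp only [Lagrange.basis, Polynomial.eval_prod]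
      exact Finset.prod_congr rfl (fun j _ => by
        simp [Lagrange.basisDivisor, mul_comm])
    set f : ℕ → ℝ := fun j => (v i - v j)⁻¹ * (y - v j) with hf
    have hsign : ∀ j ∈ s.erase i, f j = (if j < i then (-1:ℝ) else 1) * |f j| := by
      intro j hj
      obtain ⟨hji, hjs⟩ := Finset.mem_erase.mp hj
      have hjd : j ≤ d := by simpa [hs, Nat.lt_succ_iff] using hjs
      have hyv : 0 < y - v j := by
        have := Real.cos_le_one ((j:ℝ) * π / d)
        simp only [hv]
        simp only [hy]
        linarith
      rcases lt_or_gt_of_ne hji with h | h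
      · -- j < i : v i < v j, factor negative
        have : v i < v j := hdec j i h hid
        have hneg : f j < 0 := mul_neg_of_neg_of_pos (inv_lt_zero.mpr (by linarith)) hyv
        simp [if_pos h, abs_of_neg hneg]
      · have : v j < v i := hdec i j h hjd
        have hpos : 0 < f j := mul_pos (inv_pos.mpr (by linarith)) hyv
        simp [if_neg (not_lt.mpr (le_of_lt h)), abs_of_pos hpos]
    have hprodsign : ∏ j ∈ s.erase i, (if j < i then (-1:ℝ) else 1) = (-1:ℝ)^i := by
      have h0 : ∏ j ∈ s.erase i, (if j < i then (-1:ℝ) else 1)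
          = ∏ j ∈ s, (if j < i then (-1:ℝ) else 1) := by
        rw [← Finset.mul_prod_erase s _ hi, if_neg (lt_irrefl i), one_mul]
      rw [h0, Finset.prod_ite, Finset.prod_const, Finset.prod_const, one_pow, mul_one]
      congr 1
      have : s.filter (· < i) = Finset.range i := by
        ext j
        simp only [hs, Finset.mem_filter, Finset.mem_range]
        omega
      rw [this, Finset.card_range]
    have hBval : B i = (-1:ℝ)^i * |B i| := by
      calc B i = ∏ j ∈ s.erase i, f j := hBi
        _ = ∏ j ∈ s.erase i, ((if j < i then (-1:ℝ) else 1) * |f j|) :=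
            Finset.prod_congr rfl hsign
        _ = (∏ j ∈ s.erase i, (if j < i then (-1:ℝ) else 1)) * ∏ j ∈ s.erase i, |f j| :=
            Finset.prod_mul_distrib
        _ = (-1:ℝ)^i * |B i| := by
            rw [hprodsign, hBi, ← Finset.abs_prod]
    have hsq : ((-1:ℝ)^i) * ((-1:ℝ)^i) = 1 := by
      rw [← pow_add]
      exact Even.neg_one_pow ⟨i, rfl⟩
    calc |B i| = ((-1:ℝ)^i * (-1:ℝ)^i) * |B i| := by rw [hsq, one_mul]
      _ = (-1:ℝ)^i * ((-1:ℝ)^i * |B i|) := by ring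
      _ = (-1:ℝ)^i * B i := by rw [← hBval]
  -- Chebyshev polynomial interpolates the signs
  have hT : Polynomial.Chebyshev.T ℝ d = Lagrange.interpolate s v (fun i => (-1:ℝ)^i) := by
    refine Lagrange.eq_interpolate_of_eval_eq (r := fun i => (-1:ℝ)^i) hinj ?_ ?_
    · rw [hcard]; exact chebyT_degree_lt d
    intro i hi
    have hid : i ≤ d := by simpa [hs, Nat.lt_succ_iff] using hi
    have := Polynomial.Chebyshev.T_real_cos ((i:ℝ) * π / d) d
    simp only [hv]
    rw [this]
    rcases Nat.eq_zero_or_pos d with hd | hd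
    · subst hd
      interval_cases i
      norm_num
    · have hdr : (d:ℝ) ≠ 0 := by positivity
      have harg : ((d:ℤ):ℝ) * ((i:ℝ) * π / d) = 0 + (i:ℕ) * π := by
        push_cast
        field_simp
        ring
      rw [harg, Real.cos_add_nat_mul_pi, Real.cos_zero, mul_one]
  have hsum : ∑ i ∈ s, (-1:ℝ)^i * B i = (Polynomial.Chebyshev.T ℝ d).eval y := by
    rw [hT, Lagrange.interpolate_apply, Polynomial.eval_finset_sum]
    exact (Finset.sum_congr rfl (fun i _ => by simp [hB])).symm
  have hnodes : ∀ i ∈ s, |q.eval (v i)| ≤ ε * M := by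
    intro i hi
    apply hbound
    exact ⟨Real.neg_one_le_cos _, Real.cos_le_one _⟩
  calc (1:ℝ) = |∑ i ∈ s, q.eval (v i) * B i| := by rw [← h1]; norm_num
    _ ≤ ∑ i ∈ s, |q.eval (v i) * B i| := Finset.abs_sum_le_sum_abs _ _
    _ ≤ ∑ i ∈ s, (ε * M) * |B i| := Finset.sum_le_sum (fun i hi => by
        rw [abs_mul]
        exact mul_le_mul_of_nonneg_right (hnodes i hi) (abs_nonneg _))
    _ = (ε * M) * ∑ i ∈ s, |B i| := by rw [Finset.mul_sum]
    _ = (ε * M) * ((Polynomial.Chebyshev.T ℝ d).eval y) := by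
        rw [← hsum]
        congr 1
        exact Finset.sum_congr rfl habs
    _ ≤ ε * M * Real.exp (2 * d * Real.sqrt (2 * μ + μ ^ 2)) := by
        apply mul_le_mul_of_nonneg_left _ (by positivity)
        rw [hy]
        exact chebyT_eval_le d μ hμ
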